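/- Let t_P be the unique positive root of t³ - t - 1 (the smallest Pisot number, t_P ≈ 1.3247). Then for each n ∉ {3, 5}, n ≥ 1, the polynomial p_n(t) := t^n - Σ_{i=0}^{⌊(n-1)/2⌋} t^i satisfies p_n(t_P) > 0; hence the positive root of every polynomial in the family 𝒫 is at most t_P, with maximum attained exactly by t³ - t - 1 and t⁵ - t² - t - 1 = (t² + 1)(t³ - t - 1). -/
import Mathlib


/-- `u ^ n` for lists: concatenation of `n` copies of `u`. -/
def listPow {X : Type*} (u : List X) : ℕ → List X
  | 0 => []
  | n+1 => u ++ listPow u n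

/-- `P_q = { v : e ⊏ v ⊑ q ⊏ v·q }`. -/
def Pq {X : Type*} (q : List X) : Set (List X) :=
  {v | v ≠ [] ∧ v <+: q ∧ q <+: v ++ q}

/-- membership in the submonoid `P^*` generated by `P`. -/
def InStar {X : Type*} (P : Set (List X)) (w : List X) : Prop :=
  ∃ l : List (List X), (∀ v ∈ l, v ∈ P) ∧ w = l.flatten

/-- A finite word `w` is quasiperiodic with quasiperiod `q`. -/
def QuasiPeriodic {X : Type*} (q w : List X) : Prop :=
  ∀ j < w.length, ∃ u : List X, u.length ≤ j ∧ j < u.length + q.length ∧ (u ++ q) <+: w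

/-- `Q_q`: the set of finite words quasiperiodic with quasiperiod `q`. -/
def Qq {X : Type*} (q : List X) : Set (List X) := {w | QuasiPeriodic q w}

/-- `u` is a (finite) prefix of the infinite word `ξ`. -/
def InfPrefix {X : Type*} (ξ : ℕ → X) (u : List X) : Prop :=
  u = (List.range u.length).map ξ

/-- An infinite word `ξ` is quasiperiodic with quasiperiod `q`. -/
def QuasiPeriodicInf {X : Type*} (q : List X) (ξ : ℕ → X) : Prop :=
  ∀ j : ℕ, ∃ u : List X, u.length ≤ j ∧ j < u.length + q.length ∧ InfPrefix ξ (u ++ q)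

/-- the star root `P \ (P²·P*)`. -/
def StarRoot {X : Type*} (P : Set (List X)) : Set (List X) :=
  {v | v ∈ P ∧ ¬ ∃ (a b : List X) (l : List (List X)),
    a ∈ P ∧ b ∈ P ∧ (∀ x ∈ l, x ∈ P) ∧ v = a ++ b ++ l.flatten}

/-- `ξ ∈ P^ω`: infinite concatenation of nonempty words of `P`. -/
def InOmega {X : Type*} (P : Set (List X)) (ξ : ℕ → X) : Prop :=
  ∃ f : ℕ → List X, (∀ i, f i ∈ P ∧ f i ≠ []) ∧
    ∀ n, InfPrefix ξ ((List.range n).map f).flatten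

/-- With `t_P` the unique positive root of `t³ - t - 1`: `p_n(t_P) > 0` for all
`n ∉ {3,5}`, and every positive root of a polynomial of the family `𝒫` is at most
`t_P`, with equality exactly for `t³ - t - 1` and `t⁵ - t² - t - 1`. -/

lemma key (r : ℝ) (hr : 1 < r) (h3 : r + 1 ≤ r ^ 3) :
    ∀ n : ℕ, 1 ≤ n → r ^ ((n - 1) / 2 + 1) - 1 ≤ r ^ n * (r - 1) := by
  intro n
  induction n using Nat.strong_induction_on with
  | _ n ih =>
    match n with
    | 0 => intro h; omega
    | 1 => intro _; norm_num; nlinarith [sq_nonneg (r-1)]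
    | 2 => intro _; norm_num; nlinarith [sq_nonneg (r-1)]
    | 3 => intro _; norm_num; nlinarith [mul_le_mul_of_nonneg_right h3 (by linarith : (0:ℝ) ≤ r - 1)]
    | 4 =>
      intro _; norm_num
      have t0 : (0:ℝ) < r^3 := by positivity
      have t1 : r^3*(r-1) ≤ r^4*(r-1) := by nlinarith [mul_nonneg (mul_pos t0 (show (0:ℝ) < r-1 by linarith)).le (show (0:ℝ) ≤ r-1 by linarith)]
      nlinarith [mul_le_mul_of_nonneg_right h3 (by linarith : (0:ℝ) ≤ r - 1)]
    | (k+5) =>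
      intro _
      have IH := ih (k+3) (by omega) (by omega)
      set m := (k+2)/2 + 1 with hm
      have hIHe : (k+3-1)/2 + 1 = m := by omega
      rw [hIHe] at IH
      have hme : (k+5-1)/2 + 1 = m + 1 := by omega
      rw [hme]
      have hgr : r^3 ≤ r^(m+1) := pow_le_pow_right₀ hr.le (by omega)
      have hA : r + 1 ≤ r^(m+1) := h3.trans hgr
      have h2 := mul_le_mul_of_nonneg_right IH (by positivity : (0:ℝ) ≤ r^2)
      have e1 : r^(k+3)*(r-1)*r^2 = r^(k+5)*(r-1) := by ring
      have e2 : (r^m - 1)*r^2 = r^(m+1)*r - r^2 := by ring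
      have h5 : (r+1)*(r-1) ≤ r^(m+1)*(r-1) :=
        mul_le_mul_of_nonneg_right hA (by linarith)
      have e3 : r^(m+1)*(r-1) = r^(m+1)*r - r^(m+1) := by ring
      nlinarith [h2, h5]



lemma keyS (r : ℝ) (hr : 1 < r) (h3 : r + 1 ≤ r ^ 3) :
    ∀ n : ℕ, 1 ≤ n → n ≠ 3 → n ≠ 5 → r ^ ((n - 1) / 2 + 1) - 1 < r ^ n * (r - 1) := by
  have hr0 : (0:ℝ) < r := lt_trans one_pos hr
  have hr1 : (0:ℝ) < r - 1 := by linarith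
  intro n
  match n with
  | 0 => intro h; omega
  | 1 => intro _ _ _; norm_num; nlinarith [sq_nonneg (r-1)]
  | 2 => intro _ _ _; norm_num; nlinarith [sq_nonneg (r-1)]
  | 3 => intro _ h _; exact absurd rfl h
  | 4 =>
    intro _ _ _; norm_num
    -- r^2 - 1 < r^4*(r-1)
    have t0 : (0:ℝ) < r^3 := by positivity
    have t1 : r^3*(r-1) < r^4*(r-1) :=
      by nlinarith [mul_pos (mul_pos t0 hr1) hr1]
    nlinarith [mul_le_mul_of_nonneg_right h3 hr1.le]
  | 5 => intro _ _ h; exact absurd rfl h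
  | 6 =>
    intro _ _ _; norm_num
    -- r^3 - 1 < r^6*(r-1)
    have t2 : (r+1)^2 ≤ r^6 := by nlinarith [sq_nonneg (r^3 - (r+1)), pow_pos hr0 3]
    have t3 : (r+1)^2*(r-1) ≤ r^6*(r-1) := mul_le_mul_of_nonneg_right t2 hr1.le
    nlinarith [mul_pos hr0 hr1]
  | (k+7) =>
    intro _ _ _
    have IH := key r hr h3 (k+5) (by omega)
    set m := (k+4)/2 + 1 with hm
    have hIHe : (k+5-1)/2 + 1 = m := by omega
    rw [hIHe] at IH
    have hme : (k+7-1)/2 + 1 = m + 1 := by omega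
    rw [hme]
    have hgr : r^4 ≤ r^(m+1) := pow_le_pow_right₀ hr.le (by omega)
    have hA : r + 1 < r^(m+1) := by
      have : r*(r+1) ≤ r^4 := by nlinarith [mul_le_mul_of_nonneg_left h3 hr0.le]
      nlinarith [mul_pos hr0 hr1]
    have h2 := mul_le_mul_of_nonneg_right IH (by positivity : (0:ℝ) ≤ r^2)
    have h5 : (r+1)*(r-1) < r^(m+1)*(r-1) := by
      exact mul_lt_mul_of_pos_right hA hr1
    have e1 : r^(k+5)*(r-1)*r^2 = r^(k+7)*(r-1) := by ring
    have e2 : (r^m - 1)*r^2 = r^(m+1)*r - r^2 := by ring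
    have e3 : r^(m+1)*(r-1) = r^(m+1)*r - r^(m+1) := by ring
    nlinarith [h2, h5]

lemma keyAll (r : ℝ) (hr : 1 < r) (h3 : r + 1 < r ^ 3) :
    ∀ n : ℕ, 1 ≤ n → r ^ ((n - 1) / 2 + 1) - 1 < r ^ n * (r - 1) := by
  have hr0 : (0:ℝ) < r := lt_trans one_pos hr
  have hr1 : (0:ℝ) < r - 1 := by linarith
  intro n hn
  by_cases h3' : n = 3
  · subst h3'; norm_num
    nlinarith [mul_lt_mul_of_pos_right h3 hr1, mul_pos (mul_pos hr0 hr0) hr1]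
  by_cases h5' : n = 5
  · subst h5'; norm_num
    -- r^3 - 1 < r^5*(r-1)
    have t1 : r^2*(r+1) < r^5 := by nlinarith [mul_lt_mul_of_pos_left h3 (show (0:ℝ) < r^2 by positivity)]
    have t2 : r^2*(r+1)*(r-1) < r^5*(r-1) := mul_lt_mul_of_pos_right t1 hr1
    nlinarith [mul_lt_mul_of_pos_right h3 hr1]
  exact keyS r hr h3.le n hn h3' h5'



lemma uniqRoot (a b : ℝ) (ha : 1 < a) (hb : 1 < b) (h1 : a^3 = a+1) (h2 : b^3 = b+1) :
    a = b := by
  have hk : (a-b)*(a^2+a*b+b^2-1) = 0 := by linear_combination h1 - h2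
  have pos : 0 < a^2+a*b+b^2-1 := by nlinarith
  rcases mul_eq_zero.1 hk with h|h
  · linarith
  · linarith

theorem stmt17 (tP : ℝ) (htP : 0 < tP) (hroot : tP ^ 3 - tP - 1 = 0) :
    (∀ n : ℕ, 1 ≤ n → n ≠ 3 → n ≠ 5 →
      0 < tP ^ n - ∑ i ∈ Finset.range ((n - 1) / 2 + 1), tP ^ i) ∧
    (∀ (n : ℕ) (M : Finset ℕ), 1 ≤ n → 0 ∈ M → (∀ j ∈ M, 2 * j ≤ n - 1) →
      ∀ r : ℝ, 0 < r → r ^ n - ∑ i ∈ M, r ^ i = 0 →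
        r ≤ tP ∧
        (r = tP ↔ (n = 3 ∧ M = {0, 1}) ∨ (n = 5 ∧ M = {0, 1, 2}))) := by
  have htP1 : 1 < tP := by nlinarith [sq_nonneg tP, sq_nonneg (tP-1), sq_nonneg (tP+1)]
  have h3e : tP + 1 ≤ tP ^ 3 := by linarith
  have htPm1 : (0:ℝ) < tP - 1 := by linarith
  have hpart1 : ∀ n : ℕ, 1 ≤ n → n ≠ 3 → n ≠ 5 →
      0 < tP ^ n - ∑ i ∈ Finset.range ((n - 1) / 2 + 1), tP ^ i := by
    intro n hn hn3 hn5
    have hk := keyS tP htP1 h3e n hn hn3 hn5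
    rw [geom_sum_eq (ne_of_gt htP1), sub_pos, div_lt_iff₀ htPm1]
    linarith
  refine ⟨hpart1, ?_⟩
  intro n M hn h0M hMle r hr0 heq
  have hMsub : M ⊆ Finset.range ((n-1)/2 + 1) := by
    intro j hj
    have := hMle j hj
    exact Finset.mem_range.2 (by omega)
  have hle : ∑ i ∈ M, r^i ≤ ∑ i ∈ Finset.range ((n-1)/2+1), r^i :=
    Finset.sum_le_sum_of_subset_of_nonneg hMsub (fun i _ _ => by positivity)
  have hrn : r^n = ∑ i ∈ M, r^i := by linarith
  have hrle : r ≤ tP := by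
    by_contra hgt
    push_neg at hgt
    have hr1 : 1 < r := lt_trans htP1 hgt
    have hrm1 : (0:ℝ) < r - 1 := by linarith
    have h3s : r + 1 < r ^ 3 := by
      nlinarith [mul_pos (sub_pos.2 hgt)
        (show (0:ℝ) < r^2 + r*tP + tP^2 - 1 by nlinarith)]
    have hk := keyAll r hr1 h3s n hn
    have hs := geom_sum_eq (ne_of_gt hr1) ((n-1)/2+1)
    have hlt : ∑ i ∈ Finset.range ((n-1)/2+1), r^i < r^n := by
      rw [hs]; exact (div_lt_iff₀ hrm1).2 hk
    linarith
  refine ⟨hrle, ?_⟩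
  constructor
  · intro hreq
    subst hreq
    by_cases hn3 : n = 3
    · subst hn3
      left
      refine ⟨rfl, ?_⟩
      by_cases h1M : 1 ∈ M
      · apply Finset.Subset.antisymm
        · intro j hj
          have := hMle j hj
          simp only [Finset.mem_insert, Finset.mem_singleton]
          omega
        · intro j hj
          simp only [Finset.mem_insert, Finset.mem_singleton] at hj
          rcases hj with h|h <;> subst h <;> assumption
      · exfalso
        have hM0 : M = {0} := by
          apply Finset.Subset.antisymm
          · intro j hj
            have := hMle j hj
            simp only [Finset.mem_singleton]
            by_contra hne
            have : j = 1 := by omega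
            exact h1M (this ▸ hj)
          · simpa using h0M
        rw [hM0] at hrn
        simp at hrn
        nlinarith
    by_cases hn5 : n = 5
    · subst hn5
      right
      refine ⟨rfl, ?_⟩
      have hT5 : r^5 = r^2 + r + 1 := by linear_combination (r^2+1)*hroot
      have hjlt : ∀ j ∈ M, j = 0 ∨ j = 1 ∨ j = 2 := by
        intro j hj; have := hMle j hj; omega
      by_cases h1M : 1 ∈ M <;> by_cases h2M : 2 ∈ M
      · apply Finset.Subset.antisymm
        · intro j hj
          simp only [Finset.mem_insert, Finset.mem_singleton]
          exact hjlt j hj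
        · intro j hj
          simp only [Finset.mem_insert, Finset.mem_singleton] at hj
          rcases hj with h|h|h <;> subst h <;> assumption
      · exfalso
        have hM' : M = {0, 1} := by
          apply Finset.Subset.antisymm
          · intro j hj
            simp only [Finset.mem_insert, Finset.mem_singleton]
            rcases hjlt j hj with h|h|h
            · exact Or.inl h
            · exact Or.inr h
            · exact absurd (h ▸ hj) h2M
          · intro j hj
            simp only [Finset.mem_insert, Finset.mem_singleton] at hj
            rcases hj with h|h <;> subst h <;> assumption
        rw [hM'] at hrn
        rw [show (({0,1}:Finset ℕ)) = insert 0 {1} from rfl, Finset.sum_insert (by norm_num),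
          Finset.sum_singleton] at hrn
        nlinarith
      · exfalso
        have hM' : M = {0, 2} := by
          apply Finset.Subset.antisymm
          · intro j hj
            simp only [Finset.mem_insert, Finset.mem_singleton]
            rcases hjlt j hj with h|h|h
            · exact Or.inl h
            · exact absurd (h ▸ hj) h1M
            · exact Or.inr h
          · intro j hj
            simp only [Finset.mem_insert, Finset.mem_singleton] at hj
            rcases hj with h|h <;> subst h <;> assumption
        rw [hM'] at hrn
        rw [show (({0,2}:Finset ℕ)) = insert 0 {2} from rfl, Finset.sum_insert (by norm_num),
          Finset.sum_singleton] at hrn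
        nlinarith
      · exfalso
        have hM' : M = {0} := by
          apply Finset.Subset.antisymm
          · intro j hj
            simp only [Finset.mem_singleton]
            rcases hjlt j hj with h|h|h
            · exact h
            · exact absurd (h ▸ hj) h1M
            · exact absurd (h ▸ hj) h2M
          · simpa using h0M
        rw [hM'] at hrn
        simp at hrn
        nlinarith
    · exfalso
      have hp := hpart1 n hn hn3 hn5
      linarith
  · rintro (⟨hn3, hM⟩ | ⟨hn5, hM⟩)
    · subst hn3; subst hM
      rw [show (({0,1}:Finset ℕ)) = insert 0 {1} from rfl, Finset.sum_insert (by norm_num),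
        Finset.sum_singleton] at hrn
      simp at hrn
      have hr1 : 1 < r := by nlinarith [sq_nonneg r, sq_nonneg (r-1), sq_nonneg (r+1)]
      exact uniqRoot r tP hr1 htP1 (by linarith) (by linarith)
    · subst hn5; subst hM
      rw [show (({0,1,2}:Finset ℕ)) = insert 0 (insert 1 {2}) from rfl,
        Finset.sum_insert (by norm_num), Finset.sum_insert (by norm_num),
        Finset.sum_singleton] at hrn
      simp at hrn
      have hzero : (r^2+1)*(r^3-r-1) = 0 := by linear_combination hrn
      have hr3 : r^3 = r + 1 := by
        rcases mul_eq_zero.1 hzero with h|h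
        · nlinarith
        · linarith
      have hr1 : 1 < r := by nlinarith [sq_nonneg r, sq_nonneg (r-1), sq_nonneg (r+1)]
      exact uniqRoot r tP hr1 htP1 hr3 (by linarith)
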